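/- Let m ≥ 2 be an integer. The intersection graph of ideals G(ℤ_m) is weakly perfect, i.e., its chromatic number equals its clique number. -/

import Mathlib

/-- The intersection graph of ideals of `R`: vertices are the nontrivial ideals of `R`,
and two distinct vertices `I`, `J` are adjacent iff `I ∩ J ≠ 0`. -/
def idealGraph (R : Type*) [CommRing R] :
    SimpleGraph {I : Ideal R // I ≠ ⊥ ∧ I ≠ ⊤} where
  Adj I J := I ≠ J ∧ I.1 ⊓ J.1 ≠ ⊥
  symm := ⟨fun I J h => ⟨h.1.symm, by rw [inf_comm]; exact h.2⟩⟩
  loopless := ⟨fun I h => h.1 rfl⟩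

open Finset

namespace IdealGraphAux


/-- Key arithmetic identity: for divisors `x, y` of `m`,
`lcm (m/x) (m/y) * gcd x y = m`. -/
lemma lcm_div_mul_gcd {m x y : ℕ} (hm : m ≠ 0) (hx : x ∣ m) (hy : y ∣ m) :
    Nat.lcm (m / x) (m / y) * Nat.gcd x y = m := by
  have hx0 : x ≠ 0 := fun h => hm (by simpa [h] using hx)
  have hy0 : y ≠ 0 := fun h => hm (by simpa [h] using hy)
  have hdx : m / x ≠ 0 := (Nat.div_pos (Nat.le_of_dvd (Nat.pos_of_ne_zero hm) hx)
    (Nat.pos_of_ne_zero hx0)).ne'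
  have hdy : m / y ≠ 0 := (Nat.div_pos (Nat.le_of_dvd (Nat.pos_of_ne_zero hm) hy)
    (Nat.pos_of_ne_zero hy0)).ne'
  have hl0 : Nat.lcm (m / x) (m / y) ≠ 0 := Nat.lcm_ne_zero hdx hdy
  have hg0 : Nat.gcd x y ≠ 0 := Nat.gcd_ne_zero_left hx0
  apply Nat.factorization_inj (by simp [Nat.mul_ne_zero hl0 hg0]) (by simpa using hm)
  rw [Nat.factorization_mul hl0 hg0, Nat.factorization_lcm hdx hdy,
    Nat.factorization_gcd hx0 hy0, Nat.factorization_div hx, Nat.factorization_div hy]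
  ext p
  have h1 : x.factorization p ≤ m.factorization p :=
    (Finsupp.le_def.mp ((Nat.factorization_le_iff_dvd hx0 hm).mpr hx)) p
  have h2 : y.factorization p ≤ m.factorization p :=
    (Finsupp.le_def.mp ((Nat.factorization_le_iff_dvd hy0 hm).mpr hy)) p
  simp only [Finsupp.add_apply, Finsupp.sup_apply, Finsupp.inf_apply, Finsupp.tsub_apply]
  omega

lemma lcm_div_eq_iff_coprime {m x y : ℕ} (hm : m ≠ 0) (hx : x ∣ m) (hy : y ∣ m) :
    Nat.lcm (m / x) (m / y) = m ↔ Nat.Coprime x y := by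
  have key := lcm_div_mul_gcd hm hx hy
  constructor
  · intro h
    rw [h] at key
    have : m * Nat.gcd x y = m * 1 := by simpa using key
    exact mul_left_cancel₀ hm this
  · intro h
    rwa [h, mul_one] at key



variable (m : ℕ)

/-- Vertex set: divisors `x` of `m` with `x ≠ 1`, `x ≠ m`
(`x` corresponds to the ideal of index `x`, i.e. `span {m/x}`). -/
def X : Finset ℕ := m.divisors.filter fun x => x ≠ 1 ∧ x ≠ m

/-- The combinatorial model of the intersection graph. -/
def Gc : SimpleGraph {x : ℕ // x ∈ X m} where
  Adj a b := a ≠ b ∧ ¬ Nat.Coprime a.1 b.1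
  symm := ⟨fun a b h => ⟨Ne.symm h.1, fun hc => h.2 (Nat.Coprime.symm hc)⟩⟩
  loopless := ⟨fun a h => h.1 rfl⟩

/-- The class of vertices with prime support `S`. -/
def C (S : Finset ℕ) : Finset ℕ := (X m).filter fun x => x.primeFactors = S

/-- Size of the class with prime support `S`. -/
def N (S : Finset ℕ) : ℕ := (C m S).card

/-- The intersecting family of supports used both for the clique and the coloring. -/
def TT (S : Finset ℕ) : Prop :=
  N m (m.primeFactors \ S) < N m S ∨ (N m (m.primeFactors \ S) = N m S ∧ m.minFac ∈ S)

variable {m}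

lemma mem_X {x : ℕ} : x ∈ X m ↔ (x ∣ m ∧ m ≠ 0) ∧ x ≠ 1 ∧ x ≠ m := by
  simp [X, Nat.mem_divisors]

lemma X_ne_zero {x : ℕ} (hx : x ∈ X m) : x ≠ 0 := by
  rcases mem_X.mp hx with ⟨⟨h1, h2⟩, _⟩
  rintro rfl
  exact h2 (Nat.eq_zero_of_zero_dvd h1)

lemma X_two_le {x : ℕ} (hx : x ∈ X m) : 2 ≤ x := by
  have h0 := X_ne_zero hx
  rcases mem_X.mp hx with ⟨_, h1, _⟩
  omega

lemma X_support_subset {x : ℕ} (hx : x ∈ X m) : x.primeFactors ⊆ m.primeFactors :=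
  Nat.primeFactors_mono (mem_X.mp hx).1.1 (mem_X.mp hx).1.2

lemma X_support_nonempty {x : ℕ} (hx : x ∈ X m) : x.primeFactors.Nonempty :=
  Nat.nonempty_primeFactors.mpr (X_two_le hx)

lemma mem_C {S : Finset ℕ} {x : ℕ} : x ∈ C m S ↔ x ∈ X m ∧ x.primeFactors = S := by
  simp [C]

/-- Monotonicity of class sizes along inclusion of supports (for non-full targets). -/
lemma N_mono (hm : 2 ≤ m) {S S' : Finset ℕ} (h1 : S' ⊆ m.primeFactors)
    (h2 : S' ≠ m.primeFactors) (h3 : S ⊆ S') : N m S ≤ N m S' := by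
  classical
  have hm0 : m ≠ 0 := by omega
  set t := ∏ p ∈ S' \ S, p with ht
  have hprime : ∀ p ∈ S' \ S, p.Prime := fun p hp =>
    Nat.prime_of_mem_primeFactors (h1 (mem_sdiff.mp hp).1)
  have htfac : t.primeFactors = S' \ S := Nat.primeFactors_prod hprime
  have ht0 : t ≠ 0 := by
    rw [ht, Finset.prod_ne_zero_iff]
    exact fun p hp => (hprime p hp).pos.ne'
  have htdvd : t ∣ m :=
    dvd_trans (Finset.prod_dvd_prod_of_subset _ _ _ (Finset.sdiff_subset.trans h1))
      (Nat.prod_primeFactors_dvd m)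
  apply Finset.card_le_card_of_injOn (fun x => x * t)
  · intro x hx
    rcases mem_C.mp hx with ⟨hxX, hxS⟩
    have hx0 : x ≠ 0 := X_ne_zero hxX
    have hdisj : Disjoint x.primeFactors t.primeFactors := by
      rw [hxS, htfac]
      exact disjoint_sdiff_self_right
    have hcop : Nat.Coprime x t := (Nat.disjoint_primeFactors hx0 ht0).mp hdisj
    have hxt_dvd : x * t ∣ m := hcop.mul_dvd_of_dvd_of_dvd (mem_X.mp hxX).1.1 htdvd
    have hfac : (x * t).primeFactors = S' := by
      rw [Nat.primeFactors_mul hx0 ht0, hxS, htfac, Finset.union_sdiff_of_subset h3]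
    have hxt1 : x * t ≠ 1 := by
      have h2x := X_two_le hxX
      have ht1 : 1 ≤ t := Nat.pos_of_ne_zero ht0
      nlinarith
    have hxtm : x * t ≠ m := by
      intro h
      apply h2
      rw [← hfac, h]
    exact mem_C.mpr ⟨mem_X.mpr ⟨⟨hxt_dvd, hm0⟩, hxt1, hxtm⟩, hfac⟩
  · intro a _ b _ hab
    exact Nat.eq_of_mul_eq_mul_right (Nat.pos_of_ne_zero ht0) hab

lemma Gc_adj {a b : {x : ℕ // x ∈ X m}} :
    (Gc m).Adj a b ↔ a ≠ b ∧ ¬ Nat.Coprime a.1 b.1 := Iff.rfl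

lemma N_empty : N m ∅ = 0 := by
  rw [N, Finset.card_eq_zero, Finset.eq_empty_iff_forall_notMem]
  intro x hx
  rcases mem_C.mp hx with ⟨hxX, hS⟩
  exact Finset.not_nonempty_empty (hS ▸ X_support_nonempty hxX)

lemma minFac_mem_P (hm : 2 ≤ m) : m.minFac ∈ m.primeFactors :=
  Nat.mem_primeFactors.mpr ⟨Nat.minFac_prime (by omega), Nat.minFac_dvd m, by omega⟩

lemma TT_full (hm : 2 ≤ m) : TT m m.primeFactors := by
  have h0 : N m (m.primeFactors \ m.primeFactors) = 0 := by rw [sdiff_self]; exact N_empty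
  rcases Nat.eq_zero_or_pos (N m m.primeFactors) with h | h
  · exact Or.inr ⟨by omega, minFac_mem_P hm⟩
  · exact Or.inl (by omega)

lemma TT_not_both (hm : 2 ≤ m) {S S' : Finset ℕ} (hS : S ⊆ m.primeFactors)
    (hS' : S' ⊆ m.primeFactors) (hSne : S.Nonempty) (hS'ne : S'.Nonempty)
    (hdisj : Disjoint S S') (h1 : TT m S) (h2 : TT m S') : False := by
  have hPS : m.primeFactors \ S ≠ m.primeFactors := by
    intro h
    obtain ⟨p, hp⟩ := hSne
    exact (mem_sdiff.mp (h ▸ hS hp)).2 hp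
  have hPS' : m.primeFactors \ S' ≠ m.primeFactors := by
    intro h
    obtain ⟨p, hp⟩ := hS'ne
    exact (mem_sdiff.mp (h ▸ hS' hp)).2 hp
  have ha : N m S' ≤ N m (m.primeFactors \ S) :=
    N_mono hm sdiff_subset hPS (subset_sdiff.mpr ⟨hS', hdisj.symm⟩)
  have hb : N m S ≤ N m (m.primeFactors \ S') :=
    N_mono hm sdiff_subset hPS' (subset_sdiff.mpr ⟨hS, hdisj⟩)
  rcases h1 with h1 | ⟨h1, hp1⟩ <;> rcases h2 with h2 | ⟨h2, hp2⟩
  · omega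
  · omega
  · omega
  · exact Finset.disjoint_left.mp hdisj hp1 hp2

lemma TT_partner (hm : 2 ≤ m) {S : Finset ℕ} (hS : S ⊆ m.primeFactors) (hne : S.Nonempty)
    (h : ¬ TT m S) :
    N m S ≤ N m (m.primeFactors \ S) ∧ TT m (m.primeFactors \ S) := by
  have hcompl : m.primeFactors \ (m.primeFactors \ S) = S := Finset.sdiff_sdiff_eq_self hS
  rw [TT, not_or, not_and_or] at h
  have hle : N m S ≤ N m (m.primeFactors \ S) := by omega
  refine ⟨hle, ?_⟩
  rcases lt_or_eq_of_le hle with hlt | heq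
  · exact Or.inl (by rw [hcompl]; exact hlt)
  · refine Or.inr ⟨by rw [hcompl]; omega, mem_sdiff.mpr ⟨minFac_mem_P hm, ?_⟩⟩
    rcases h.2 with h' | h'
    · omega
    · exact h'

lemma core (hm : 2 ≤ m) :
    ∃ n : ℕ, (Gc m).chromaticNumber = (n : ℕ∞) ∧ (Gc m).cliqueNum = n := by
  classical
  set P := m.primeFactors with hP
  set K : Finset {x : ℕ // x ∈ X m} :=
    Finset.univ.filter (fun v => TT m v.1.primeFactors) with hK
  have hclique : (Gc m).IsClique ↑K := by
    intro u hu v hv huv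
    simp only [hK, coe_filter, Set.mem_setOf_eq, Finset.mem_coe, mem_filter] at hu hv
    refine ⟨huv, fun hcop => ?_⟩
    exact TT_not_both hm (X_support_subset u.2) (X_support_subset v.2)
      (X_support_nonempty u.2) (X_support_nonempty v.2)
      hcop.disjoint_primeFactors hu.2 hv.2
  -- per-class injections
  have exists_g : ∀ S : Finset ℕ, ∃ g : ℕ → ℕ, N m S ≤ N m (P \ S) →
      (Set.InjOn g ↑(C m S) ∧ ∀ x ∈ C m S, g x ∈ C m (P \ S)) := by
    intro S
    by_cases h : N m S ≤ N m (P \ S)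
    · have hcard : Fintype.card ↥(C m S) ≤ Fintype.card ↥(C m (P \ S)) := by
        simpa [Fintype.card_coe, N] using h
      obtain ⟨F⟩ := Function.Embedding.nonempty_of_card_le hcard
      refine ⟨fun x => if hx : x ∈ C m S then (F ⟨x, hx⟩ : ℕ) else 0, fun _ => ⟨?_, ?_⟩⟩
      · intro a ha b hb hab
        rw [Finset.mem_coe] at ha hb
        have hab' : (if hx : a ∈ C m S then (F ⟨a, hx⟩ : ℕ) else 0)
            = (if hx : b ∈ C m S then (F ⟨b, hx⟩ : ℕ) else 0) := hab
        rw [dif_pos ha, dif_pos hb] at hab'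
        replace hab := hab'
        have := F.injective (Subtype.ext hab)
        simpa using congrArg Subtype.val this
      · intro x hx
        show (if h : x ∈ C m S then (F ⟨x, h⟩ : ℕ) else 0) ∈ C m (P \ S)
        rw [dif_pos hx]
        exact (F ⟨x, hx⟩).2
    · exact ⟨id, fun hc => absurd hc h⟩
  choose gf hgf using exists_g
  have hcg0 : ∀ v : {x : ℕ // x ∈ X m}, ¬ TT m v.1.primeFactors →
      gf v.1.primeFactors v.1 ∈ C m (P \ v.1.primeFactors) ∧
        TT m (P \ v.1.primeFactors) := by
    intro v hv
    obtain ⟨hle, hTT⟩ := TT_partner hm (X_support_subset v.2) (X_support_nonempty v.2) hv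
    exact ⟨(hgf _ hle).2 v.1 (mem_C.mpr ⟨v.2, rfl⟩), hTT⟩
  set cg : {x : ℕ // x ∈ X m} → ℕ :=
    fun v => if TT m v.1.primeFactors then (v.1 : ℕ) else gf v.1.primeFactors v.1 with hcg
  have hcgX : ∀ v, cg v ∈ X m ∧ TT m ((cg v).primeFactors) := by
    intro v
    by_cases h : TT m v.1.primeFactors
    · simp only [hcg, if_pos h]
      exact ⟨v.2, h⟩
    · simp only [hcg, if_neg h]
      obtain ⟨h1, h2⟩ := hcg0 v h
      rcases mem_C.mp h1 with ⟨hX, hfac⟩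
      exact ⟨hX, by rw [hfac]; exact h2⟩
  have hproper : ∀ u v, (Gc m).Adj u v → cg u ≠ cg v := by
    intro u v hadj
    obtain ⟨hne, hncop⟩ := Gc_adj.mp hadj
    have hu0 : u.1 ≠ 0 := X_ne_zero u.2
    have hv0 : v.1 ≠ 0 := X_ne_zero v.2
    have hshare : ¬ Disjoint u.1.primeFactors v.1.primeFactors := by
      rw [Nat.disjoint_primeFactors hu0 hv0]; exact hncop
    obtain ⟨p, hpu, hpv⟩ := Finset.not_disjoint_iff.mp hshare
    by_cases hTu : TT m u.1.primeFactors <;> by_cases hTv : TT m v.1.primeFactors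
    · simp only [hcg, if_pos hTu, if_pos hTv]
      exact fun h => hne (Subtype.ext h)
    · simp only [hcg, if_pos hTu, if_neg hTv]
      intro h
      have h2 := (mem_C.mp (hcg0 v hTv).1).2
      exact (mem_sdiff.mp (h2 ▸ (h ▸ hpu))).2 hpv
    · simp only [hcg, if_neg hTu, if_pos hTv]
      intro h
      have h2 := (mem_C.mp (hcg0 u hTu).1).2
      exact (mem_sdiff.mp (h2 ▸ (h.symm ▸ hpv))).2 hpu
    · simp only [hcg, if_neg hTu, if_neg hTv]
      have h2u := (mem_C.mp (hcg0 u hTu).1).2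
      have h2v := (mem_C.mp (hcg0 v hTv).1).2
      by_cases hS : u.1.primeFactors = v.1.primeFactors
    
      · obtain ⟨hle, _⟩ :=
          TT_partner hm (X_support_subset v.2) (X_support_nonempty v.2) hTv
        intro h
        rw [hS] at h
        have hu1 : (u.1 : ℕ) ∈ C m v.1.primeFactors := mem_C.mpr ⟨u.2, hS⟩
        have hv1 : (v.1 : ℕ) ∈ C m v.1.primeFactors := mem_C.mpr ⟨v.2, rfl⟩
        have := (hgf _ hle).1 (Finset.mem_coe.mpr hu1) (Finset.mem_coe.mpr hv1) h
        exact hne (Subtype.ext this)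
      · intro h
        apply hS
        have hfac : (gf u.1.primeFactors u.1).primeFactors
            = (gf v.1.primeFactors v.1).primeFactors := by rw [h]
        rw [h2u, h2v] at hfac
        rw [← Finset.sdiff_sdiff_eq_self (X_support_subset u.2),
          ← Finset.sdiff_sdiff_eq_self (X_support_subset v.2), hfac]
  have coloring : (Gc m).Coloring ↥K :=
    SimpleGraph.Coloring.mk
      (fun v => (⟨⟨cg v, (hcgX v).1⟩, by
        simp only [hK, mem_filter, Finset.mem_univ, true_and]
        exact (hcgX v).2⟩ : ↥K))
      (by
        intro u v hadj h
        exact hproper u v hadj (congrArg (fun w => w.1.1) h))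
  have hcolorable : (Gc m).Colorable K.card := by
    have := coloring.colorable
    rwa [Fintype.card_coe] at this
  refine ⟨K.card, ?_, ?_⟩
  · refine le_antisymm hcolorable.chromaticNumber_le ?_
    simpa using hclique.card_le_chromaticNumber
  · refine le_antisymm ?_ ?_
    · obtain ⟨s, hs⟩ := (Gc m).exists_isNClique_cliqueNum
      have h1 := hs.isClique.card_le_of_colorable hcolorable
      rw [← hs.card_eq]
      exact h1
    · exact SimpleGraph.IsClique.card_le_cliqueNum (tc := hclique)



variable {m : ℕ}

lemma map_span_natCast (d : ℕ) :
    Ideal.map (Int.castRingHom (ZMod m)) (Ideal.span {((d : ℕ) : ℤ)})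
      = Ideal.span {((d : ℕ) : ZMod m)} := by
  rw [Ideal.map_span, Set.image_singleton]
  norm_num

lemma comap_span (hm : m ≠ 0) {d : ℕ} (hd : d ∣ m) :
    Ideal.comap (Int.castRingHom (ZMod m)) (Ideal.span {((d : ℕ) : ZMod m)})
      = Ideal.span {((d : ℕ) : ℤ)} := by
  rw [← map_span_natCast d, Ideal.comap_map_of_surjective (Int.castRingHom (ZMod m)) ZMod.intCast_surjective,
    ← RingHom.ker_eq_comap_bot, ZMod.ker_intCastRingHom]
  refine sup_eq_left.mpr (Ideal.span_singleton_le_span_singleton.mpr ?_)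
  exact Int.natCast_dvd_natCast.mpr hd

lemma bot_iff_comap (I : Ideal (ZMod m)) :
    I = ⊥ ↔ Ideal.comap (Int.castRingHom (ZMod m)) I = Ideal.span {((m : ℕ) : ℤ)} := by
  constructor
  · rintro rfl
    rw [← ZMod.ker_intCastRingHom, RingHom.ker_eq_comap_bot]
  · intro h
    have h2 := Ideal.map_comap_of_surjective (Int.castRingHom (ZMod m)) ZMod.intCast_surjective I
    rw [h, map_span_natCast, ZMod.natCast_self] at h2
    rw [← h2]
    exact Ideal.span_singleton_eq_bot.mpr rfl

lemma span_d_inj (hm : m ≠ 0) {d e : ℕ} (hd : d ∣ m) (he : e ∣ m)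
    (h : Ideal.span {((d : ℕ) : ZMod m)} = Ideal.span {((e : ℕ) : ZMod m)}) : d = e := by
  have h1 := congrArg (Ideal.comap (Int.castRingHom (ZMod m))) h
  rw [comap_span hm hd, comap_span hm he] at h1
  have h2 := Int.associated_iff_natAbs.mp (Ideal.span_singleton_eq_span_singleton.mp h1)
  simpa using h2

lemma span_d_eq_bot_iff [NeZero m] {d : ℕ} (hd : d ∣ m) :
    Ideal.span {((d : ℕ) : ZMod m)} = ⊥ ↔ d = m := by
  rw [Ideal.span_singleton_eq_bot, ZMod.natCast_eq_zero_iff]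
  exact ⟨fun h => Nat.dvd_antisymm hd h, fun h => h ▸ dvd_rfl⟩

lemma span_d_eq_top_iff [NeZero m] {d : ℕ} (hd : d ∣ m) :
    Ideal.span {((d : ℕ) : ZMod m)} = ⊤ ↔ d = 1 := by
  rw [Ideal.span_singleton_eq_top, ZMod.isUnit_iff_coprime, Nat.Coprime, Nat.gcd_eq_left hd]

lemma inf_span_eq_bot_iff (hm : m ≠ 0) {d e : ℕ} (hd : d ∣ m) (he : e ∣ m) :
    Ideal.span {((d : ℕ) : ZMod m)} ⊓ Ideal.span {((e : ℕ) : ZMod m)} = ⊥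
      ↔ Nat.lcm d e = m := by
  rw [bot_iff_comap, Ideal.comap_inf, comap_span hm hd, comap_span hm he]
  have hspan : Ideal.span {((d : ℕ) : ℤ)} ⊓ Ideal.span {((e : ℕ) : ℤ)}
      = Ideal.span {((Nat.lcm d e : ℕ) : ℤ)} := by
    ext n
    simp only [Ideal.mem_inf, Ideal.mem_span_singleton]
    constructor
    · rintro ⟨h1, h2⟩
      have h3 := Int.lcm_dvd (c := n.natAbs) (Int.dvd_natAbs.mpr h1) (Int.dvd_natAbs.mpr h2)
      simpa [Int.lcm, Int.natAbs_natCast, Int.dvd_natAbs, Int.natCast_dvd] using h3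
    · intro h
      exact ⟨dvd_trans (Int.natCast_dvd_natCast.mpr (Nat.dvd_lcm_left d e)) h,
        dvd_trans (Int.natCast_dvd_natCast.mpr (Nat.dvd_lcm_right d e)) h⟩
  rw [hspan]
  constructor
  · intro h
    simpa using Int.associated_iff_natAbs.mp (Ideal.span_singleton_eq_span_singleton.mp h)
  · intro h
    rw [h]

lemma exists_rep (hm : 2 ≤ m) (I : Ideal (ZMod m)) (hb : I ≠ ⊥) (ht : I ≠ ⊤) :
    ∃ d : ℕ, d ∣ m ∧ d ≠ 0 ∧ d ≠ 1 ∧ d ≠ m ∧ I = Ideal.span {((d : ℕ) : ZMod m)} := by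
  have hm0 : m ≠ 0 := by omega
  obtain ⟨g, hg⟩ := Submodule.IsPrincipal.principal (Ideal.comap (Int.castRingHom (ZMod m)) I)
  obtain ⟨d, hdd⟩ : ∃ d : ℕ, d = g.natAbs := ⟨_, rfl⟩
  have hgd : Ideal.comap (Int.castRingHom (ZMod m)) I = Ideal.span {((d : ℕ) : ℤ)} := by
    rw [hg, hdd]
    exact (Ideal.span_singleton_eq_span_singleton.mpr (Int.associated_natAbs g)).symm.symm
  have hmem : ((m : ℕ) : ℤ) ∈ Ideal.comap (Int.castRingHom (ZMod m)) I := by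
    simp only [Ideal.mem_comap, Int.coe_castRingHom, Int.cast_natCast, ZMod.natCast_self]
    exact I.zero_mem
  rw [hgd, Ideal.mem_span_singleton] at hmem
  have hdm : d ∣ m := by exact_mod_cast hmem
  have hImap : I = Ideal.span {((d : ℕ) : ZMod m)} := by
    have h2 := Ideal.map_comap_of_surjective (Int.castRingHom (ZMod m)) ZMod.intCast_surjective I
    rw [hgd, map_span_natCast] at h2
    exact h2.symm
  have hd0 : d ≠ 0 := by
    rintro rfl
    simp only [Nat.cast_zero, zero_dvd_iff] at hmem
    exact hm0 (by exact_mod_cast hmem)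
  have hd1 : d ≠ 1 := by
    rintro rfl
    apply ht
    rw [hImap, Nat.cast_one, Ideal.span_singleton_one]
  have hdmne : d ≠ m := by
    rintro rfl
    apply hb
    rw [hImap, ZMod.natCast_self]
    exact Ideal.span_singleton_eq_bot.mpr rfl
  exact ⟨d, hdm, hd0, hd1, hdmne, hImap⟩



lemma iso_chromaticNumber {α β : Type*} {G : SimpleGraph α} {H : SimpleGraph β} (e : G ≃g H) :
    G.chromaticNumber = H.chromaticNumber :=
  le_antisymm (SimpleGraph.chromaticNumber_mono_of_hom e.toHom)
    (SimpleGraph.chromaticNumber_mono_of_hom e.symm.toHom)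

lemma iso_clique_map {α β : Type*} {G : SimpleGraph α} {H : SimpleGraph β} (e : G ≃g H)
    {s : Finset α} (hs : G.IsClique ↑s) : H.IsClique ↑(s.map e.toEquiv.toEmbedding) := by
  intro a ha b hb hab
  simp only [Finset.coe_map, Set.mem_image, Finset.mem_coe] at ha hb
  obtain ⟨x, hx, rfl⟩ := ha
  obtain ⟨y, hy, rfl⟩ := hb
  have hxy : x ≠ y := fun h => hab (by rw [h])
  exact e.map_adj_iff.mpr (hs hx hy hxy)

lemma iso_cliqueNum_le {α β : Type*} [Fintype α] [Fintype β]
    {G : SimpleGraph α} {H : SimpleGraph β} (e : G ≃g H) : G.cliqueNum ≤ H.cliqueNum := by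
  obtain ⟨s, hs⟩ := G.exists_isNClique_cliqueNum
  have hc := iso_clique_map e hs.isClique
  have h1 := SimpleGraph.IsClique.card_le_cliqueNum (tc := hc)
  rw [Finset.card_map] at h1
  rw [← hs.card_eq]
  exact h1

lemma iso_cliqueNum {α β : Type*} [Fintype α] [Fintype β]
    {G : SimpleGraph α} {H : SimpleGraph β} (e : G ≃g H) : G.cliqueNum = H.cliqueNum :=
  le_antisymm (iso_cliqueNum_le e) (iso_cliqueNum_le e.symm)


theorem main (m : ℕ) (hm : 2 ≤ m) :
    (idealGraph (ZMod m)).chromaticNumber = ((idealGraph (ZMod m)).cliqueNum : ℕ∞) := by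
  classical
  haveI : NeZero m := ⟨by omega⟩
  have hm0 : m ≠ 0 := by omega
  have hdvd : ∀ x : {x : ℕ // x ∈ X m}, (m / x.1) ∣ m := fun x =>
    ⟨x.1, (Nat.div_mul_cancel (mem_X.mp x.2).1.1).symm⟩
  have hinv : ∀ x : {x : ℕ // x ∈ X m}, m / (m / x.1) = x.1 := fun x =>
    Nat.div_div_self (mem_X.mp x.2).1.1 hm0
  have hdm : ∀ x : {x : ℕ // x ∈ X m}, m / x.1 ≠ m := by
    intro x h
    have h2 := hinv x
    rw [h, Nat.div_self (by omega : 0 < m)] at h2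
    exact (mem_X.mp x.2).2.1 h2.symm
  have hd1 : ∀ x : {x : ℕ // x ∈ X m}, m / x.1 ≠ 1 := by
    intro x h
    have h2 := hinv x
    rw [h, Nat.div_one] at h2
    exact (mem_X.mp x.2).2.2 h2.symm
  set F : {x : ℕ // x ∈ X m} → {I : Ideal (ZMod m) // I ≠ ⊥ ∧ I ≠ ⊤} :=
    fun x => ⟨Ideal.span {((m / x.1 : ℕ) : ZMod m)},
      fun h => hdm x ((span_d_eq_bot_iff (hdvd x)).mp h),
      fun h => hd1 x ((span_d_eq_top_iff (hdvd x)).mp h)⟩ with hF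
  have hFinj : Function.Injective F := by
    intro x y h
    have h1 : Ideal.span {((m / x.1 : ℕ) : ZMod m)}
        = Ideal.span {((m / y.1 : ℕ) : ZMod m)} := congrArg Subtype.val h
    have h2 := span_d_inj hm0 (hdvd x) (hdvd y) h1
    apply Subtype.ext
    rw [← hinv x, ← hinv y, h2]
  have hFsurj : Function.Surjective F := by
    rintro ⟨I, hb, ht⟩
    obtain ⟨d, hdvd', hd0, hd1', hdm', hI⟩ := exists_rep hm I hb ht
    have hxX : m / d ∈ X m := by
      refine mem_X.mpr ⟨⟨⟨d, (Nat.div_mul_cancel hdvd').symm⟩, hm0⟩, ?_, ?_⟩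
      · intro h
        apply hdm'
        have h2 := Nat.div_div_self hdvd' hm0
        rw [h, Nat.div_one] at h2
        exact h2.symm
      · intro h
        apply hd1'
        have h2 := Nat.div_div_self hdvd' hm0
        rw [h, Nat.div_self (by omega : 0 < m)] at h2
        exact h2.symm
    refine ⟨⟨m / d, hxX⟩, ?_⟩
    apply Subtype.ext
    show Ideal.span {((m / (m / d) : ℕ) : ZMod m)} = I
    rw [Nat.div_div_self hdvd' hm0, hI]
  have hadj : ∀ x y, (Gc m).Adj x y ↔ (idealGraph (ZMod m)).Adj (F x) (F y) := by
    intro x y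
    rw [Gc_adj]
    constructor
    · rintro ⟨hne, hncop⟩
      refine ⟨fun h => hne (hFinj h), fun h => ?_⟩
      have h' : Ideal.span {((m / x.1 : ℕ) : ZMod m)}
          ⊓ Ideal.span {((m / y.1 : ℕ) : ZMod m)} = ⊥ := h
      rw [inf_span_eq_bot_iff hm0 (hdvd x) (hdvd y)] at h'
      exact hncop ((lcm_div_eq_iff_coprime hm0 (mem_X.mp x.2).1.1 (mem_X.mp y.2).1.1).mp h')
    · rintro ⟨hne, hninf⟩
      refine ⟨fun h => hne (congrArg F h), fun hcop => hninf ?_⟩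
      show Ideal.span {((m / x.1 : ℕ) : ZMod m)}
          ⊓ Ideal.span {((m / y.1 : ℕ) : ZMod m)} = ⊥
      rw [inf_span_eq_bot_iff hm0 (hdvd x) (hdvd y)]
      exact (lcm_div_eq_iff_coprime hm0 (mem_X.mp x.2).1.1 (mem_X.mp y.2).1.1).mpr hcop
  let e : Gc m ≃g idealGraph (ZMod m) :=
    ⟨Equiv.ofBijective F ⟨hFinj, hFsurj⟩, fun {x y} => (hadj x y).symm⟩
  obtain ⟨n, hχ, hω⟩ := core hm
  haveI : Finite (Ideal (ZMod m)) :=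
    Finite.of_injective (fun I => (I : Set (ZMod m))) SetLike.coe_injective
  haveI : Fintype {I : Ideal (ZMod m) // I ≠ ⊥ ∧ I ≠ ⊤} := Fintype.ofFinite _
  rw [← iso_chromaticNumber e, hχ, ← iso_cliqueNum e, hω]

end IdealGraphAux

/-- For every `m ≥ 2`, the intersection graph of ideals `G(ℤ_m)` is weakly
perfect: its chromatic number equals its clique number. -/
theorem idealGraph_weakly_perfect (m : ℕ) (hm : 2 ≤ m) :
    (idealGraph (ZMod m)).chromaticNumber = ((idealGraph (ZMod m)).cliqueNum : ℕ∞) :=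
  IdealGraphAux.main m hm
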